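/- Let p be a prime, n a positive integer, R an F_p-algebra and λ ∈ R, and let B be a commutative R-algebra. An R-linear map f: R[T]/(T^{p^n}) → B, written as the tuple (a_0, ..., a_{p^n-1}) with a_s = f(T^s), is invertible for the convolution product if and only if a_0 · ∏_{r=1}^{p^n-1} (∑_{k=0}^{r} C(r,k) λ^k a_k) is invertible in B. -/

import Mathlib

open Finset

private lemma pascal_sum {B : Type*} [CommRing B] (w : ℕ) (g : ℕ → B) :
    ∑ m ∈ range (w + 2), ((w + 1).choose m : B) * g m
      = ∑ m ∈ range (w + 1), (w.choose m : B) * g m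
        + ∑ m ∈ range (w + 1), (w.choose m : B) * g (m + 1) := by
  rw [Finset.sum_range_succ' (fun m => ((w + 1).choose m : B) * g m) (w + 1)]
  have h : ∀ m ∈ range (w + 1), ((w + 1).choose (m + 1) : B) * g (m + 1)
      = (w.choose m : B) * g (m + 1) + (w.choose (m + 1) : B) * g (m + 1) := by
    intro m _
    rw [Nat.choose_succ_succ]
    push_cast
    ring
  rw [Finset.sum_congr rfl h, Finset.sum_add_distrib]
  have h2 : ∑ m ∈ range (w + 1), (w.choose (m + 1) : B) * g (m + 1)
      + ((w + 1).choose 0 : B) * g 0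
      = ∑ m ∈ range (w + 1), (w.choose m : B) * g m := by
    rw [Finset.sum_range_succ]
    rw [Finset.sum_range_succ' (fun m => (w.choose m : B) * g m) w]
    simp [Nat.choose_eq_zero_of_lt (Nat.lt_succ_self w)]
  rw [add_assoc, h2]
  ring

private lemma inner_sum7 {B : Type*} [CommRing B] (lam : B) :
    ∀ (u v : ℕ) (a : ℕ → B),
      ∑ i ∈ range (u + 1), (u.choose i : B) *
          ∑ k ∈ range (v + 1), (v.choose k : B) * lam ^ (i + k) * a (i + k)
        = ∑ m ∈ range (u + v + 1), ((u + v).choose m : B) * lam ^ m * a m := by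
  intro u
  induction u with
  | zero => intro v a; simp
  | succ u ih =>
    intro v a
    set H : ℕ → B := fun i => ∑ k ∈ range (v + 1), (v.choose k : B) * lam ^ (i + k) * a (i + k)
      with hH
    have step : ∑ i ∈ range (u + 2), ((u + 1).choose i : B) * H i
        = ∑ i ∈ range (u + 1), (u.choose i : B) * H i
          + ∑ i ∈ range (u + 1), (u.choose i : B) * H (i + 1) := pascal_sum u H
    rw [step]
    have e1 : ∑ i ∈ range (u + 1), (u.choose i : B) * H i
        = ∑ m ∈ range (u + v + 1), ((u + v).choose m : B) * lam ^ m * a m := ih v a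
    have e2 : ∑ i ∈ range (u + 1), (u.choose i : B) * H (i + 1)
        = ∑ m ∈ range (u + v + 1), ((u + v).choose m : B) * lam ^ m * (lam * a (m + 1)) := by
      have := ih v (fun m => lam * a (m + 1))
      rw [← this]
      apply Finset.sum_congr rfl
      intro i _
      rw [hH]
      simp only
      rw [Finset.mul_sum, Finset.mul_sum]
      apply Finset.sum_congr rfl
      intro k _
      have : i + 1 + k = i + k + 1 := by omega
      rw [this, pow_succ]
      ring
    rw [e1, e2]
    have rhs : ∑ m ∈ range (u + 1 + v + 1), ((u + 1 + v).choose m : B) * lam ^ m * a m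
        = ∑ m ∈ range (u + v + 1), ((u + v).choose m : B) * (lam ^ m * a m)
          + ∑ m ∈ range (u + v + 1), ((u + v).choose m : B) * (lam ^ (m + 1) * a (m + 1)) := by
      have h1 : u + 1 + v + 1 = (u + v) + 2 := by omega
      have h2 : u + 1 + v = (u + v) + 1 := by omega
      rw [h1, h2]
      have := pascal_sum (u + v) (fun m => lam ^ m * a m)
      rw [← this]
      apply Finset.sum_congr rfl
      intro m _
      ring
    rw [rhs]
    congr 1
    · apply Finset.sum_congr rfl; intro m _; ring
    · apply Finset.sum_congr rfl; intro m _; rw [pow_succ]; ring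

private lemma key7 {B : Type*} [CommRing B] (lam : B) (a b : ℕ → B) (r : ℕ) :
    ∑ j ∈ range (r + 1), (r.choose j : B) * lam ^ j *
        ∑ l ∈ range (j + 1), (j.choose l : B) *
          (∑ k ∈ range (l + 1), (l.choose k : B) * lam ^ k * a (k + j - l)) * b l
      = (∑ k ∈ range (r + 1), (r.choose k : B) * lam ^ k * a k) *
        (∑ l ∈ range (r + 1), (r.choose l : B) * lam ^ l * b l) := by
  -- T j l
  set T : ℕ → ℕ → B := fun j l => (r.choose j : B) * lam ^ j * ((j.choose l : B) *
      (∑ k ∈ range (l + 1), (l.choose k : B) * lam ^ k * a (k + j - l)) * b l) with hT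
  have h1 : ∀ j ∈ range (r + 1),
      (r.choose j : B) * lam ^ j *
        ∑ l ∈ range (j + 1), (j.choose l : B) *
          (∑ k ∈ range (l + 1), (l.choose k : B) * lam ^ k * a (k + j - l)) * b l
      = ∑ l ∈ range (r + 1), T j l := by
    intro j hj
    rw [Finset.mul_sum]
    apply Finset.sum_subset
    · exact Finset.range_subset_range.mpr (by simp at hj; omega)
    · intro l hl hl2
      simp only [Finset.mem_range] at hl hl2
      have : j < l := by omega
      simp [hT, Nat.choose_eq_zero_of_lt this]
  rw [Finset.sum_congr rfl h1, Finset.sum_comm]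
  -- now per l
  have h2 : ∀ l ∈ range (r + 1), ∑ j ∈ range (r + 1), T j l
      = (r.choose l : B) * lam ^ l * b l *
        (∑ m ∈ range (r + 1), (r.choose m : B) * lam ^ m * a m) := by
    intro l hl
    have hlr : l ≤ r := by simp at hl; omega
    have hsub : ∑ j ∈ range (r + 1), T j l = ∑ j ∈ Ico l (r + 1), T j l := by
      symm
      apply Finset.sum_subset
      · intro j hj; simp at hj ⊢; omega
      · intro j hj hj2
        simp only [Finset.mem_range, Finset.mem_Ico] at hj hj2
        have : j < l := by omega
        simp [hT, Nat.choose_eq_zero_of_lt this]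
    rw [hsub, Finset.sum_Ico_eq_sum_range]
    have hrange : r + 1 - l = (r - l) + 1 := by omega
    rw [hrange]
    have h3 : ∀ i ∈ range ((r - l) + 1), T (l + i) l
        = (r.choose l : B) * lam ^ l * b l *
          (((r - l).choose i : B) *
            ∑ k ∈ range (l + 1), (l.choose k : B) * lam ^ (i + k) * a (i + k)) := by
      intro i hi
      have hir : i ≤ r - l := by simp at hi; omega
      have hlir : l + i ≤ r := by omega
      have hc : ((r.choose (l + i) : ℕ) : B) * (((l + i).choose l : ℕ) : B)
          = ((r.choose l : ℕ) : B) * (((r - l).choose i : ℕ) : B) := by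
        have := Nat.choose_mul (n := r) (Nat.le_add_right l i)
        have h4 : l + i - l = i := by omega
        rw [h4] at this
        exact_mod_cast congrArg (Nat.cast : ℕ → B) this
      rw [hT]
      simp only
      have hinner : ∑ k ∈ range (l + 1), (l.choose k : B) * lam ^ k * a (k + (l + i) - l)
          = ∑ k ∈ range (l + 1), (l.choose k : B) * lam ^ k * a (k + i) := by
        apply Finset.sum_congr rfl
        intro k _
        have : k + (l + i) - l = k + i := by omega
        rw [this]
      rw [hinner]
      have hinner2 : ∑ k ∈ range (l + 1), (l.choose k : B) * lam ^ (i + k) * a (i + k)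
          = lam ^ i * ∑ k ∈ range (l + 1), (l.choose k : B) * lam ^ k * a (k + i) := by
        rw [Finset.mul_sum]
        apply Finset.sum_congr rfl
        intro k _
        rw [pow_add]
        have : i + k = k + i := by omega
        rw [this]
        ring
      rw [hinner2, pow_add]
      linear_combination (lam ^ l * lam ^ i *
        (∑ k ∈ range (l + 1), (l.choose k : B) * lam ^ k * a (k + i)) * b l) * hc
    rw [Finset.sum_congr rfl h3, ← Finset.mul_sum]
    congr 1
    have := inner_sum7 lam (r - l) l a
    have hrl : r - l + l = r := by omega
    rw [hrl] at this
    exact this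
  rw [Finset.sum_congr rfl h2]
  rw [← Finset.sum_mul]
  ring

private noncomputable def convInv7 {B : Type*} [CommRing B] (M : ℕ → ℕ → B) (e : ℕ → B) :
    ℕ → B
  | s => e s * ((if s = 0 then 1 else 0)
      - ∑ l ∈ (Finset.range s).attach, M s l.1 * convInv7 M e l.1)
termination_by s => s
decreasing_by exact Finset.mem_range.mp l.2

private lemma convInv7_eq {B : Type*} [CommRing B] (M : ℕ → ℕ → B) (e : ℕ → B) (s : ℕ) :
    convInv7 M e s = e s * ((if s = 0 then 1 else 0)
      - ∑ l ∈ Finset.range s, M s l * convInv7 M e l) := by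
  rw [convInv7]
  rw [Finset.sum_attach (Finset.range s) (fun l => M s l * convInv7 M e l)]

/-- Convolution invertibility criterion for `R[T]/(T^{p^n})` with
`Δ(T) = T⊗1 + 1⊗T + λT⊗T`: an `R`-linear map to a commutative `R`-algebra `B`, given by
the tuple `(a_0,…,a_{p^n-1})` of its values on `1, T, …, T^{p^n-1}`, is invertible for the
convolution product (which, by the comultiplication formula
`Δ(T^s) = ∑_{l≤s} C(s,l)(∑_{k≤l} C(l,k) λ^k T^{k+s-l}) ⊗ T^l`, sends `(a,b)` to
`s ↦ ∑_{l≤s} C(s,l)(∑_{k≤l} C(l,k) λ^k a_{k+s-l}) b_l`, with convolution unit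
`ε = (1,0,…,0)`) iff `a_0 · ∏_{r=1}^{p^n-1} (∑_{k=0}^{r} C(r,k) λ^k a_k)` is a unit. -/
theorem stmt7 (p : ℕ) [Fact p.Prime] (n : ℕ) (hn : 0 < n)
    (R : Type*) [CommRing R] [CharP R p] (lam : R)
    (B : Type*) [CommRing B] [Algebra R B] (a : ℕ → B) :
    (∃ b : ℕ → B, ∀ s < p ^ n,
        (∑ l ∈ Finset.range (s + 1), (s.choose l : B) *
          (∑ k ∈ Finset.range (l + 1),
            (l.choose k : B) * algebraMap R B lam ^ k * a (k + s - l)) * b l)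
          = if s = 0 then 1 else 0) ↔
      IsUnit (a 0 * ∏ r ∈ Finset.Icc 1 (p ^ n - 1),
        ∑ k ∈ Finset.range (r + 1),
          (r.choose k : B) * algebraMap R B lam ^ k * a k) := by
  classical
  have hp : 0 < p := (Fact.out : p.Prime).pos
  have hN : 1 ≤ p ^ n := Nat.one_le_pow n p hp
  set L : B := algebraMap R B lam with hL
  set D : ℕ → B := fun r => ∑ k ∈ Finset.range (r + 1), (r.choose k : B) * L ^ k * a k
    with hD
  constructor
  · rintro ⟨b, hb⟩
    have hDu : ∀ r, r < p ^ n →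
        D r * (∑ l ∈ Finset.range (r + 1), (r.choose l : B) * L ^ l * b l) = 1 := by
      intro r hr
      rw [hD]
      simp only
      rw [← key7 L a b r]
      have hcong : ∀ j ∈ Finset.range (r + 1),
          (r.choose j : B) * L ^ j *
            ∑ l ∈ Finset.range (j + 1), (j.choose l : B) *
              (∑ k ∈ Finset.range (l + 1), (l.choose k : B) * L ^ k * a (k + j - l)) * b l
          = (r.choose j : B) * L ^ j * (if j = 0 then 1 else 0) := by
        intro j hj
        have hjN : j < p ^ n := by simp at hj; omega
        rw [hb j hjN]
      rw [Finset.sum_congr rfl hcong]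
      simp
    have h0 : IsUnit (a 0) := by
      have := hDu 0 (by omega)
      simp [hD] at this
      exact IsUnit.of_mul_eq_one _ this
    refine h0.mul ?_
    apply Finset.prod_induction _ IsUnit (fun u v hu hv => hu.mul hv) isUnit_one
    intro r hrm
    rw [Finset.mem_Icc] at hrm
    exact IsUnit.of_mul_eq_one _ (hDu r (by omega))
  · intro hu
    have h0 : IsUnit (a 0) := isUnit_of_mul_isUnit_left hu
    have hdr : ∀ r, r < p ^ n → IsUnit (D r) := by
      intro r hr
      rcases Nat.eq_zero_or_pos r with h | h
      · subst h
        simpa [hD] using h0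
      · refine isUnit_of_dvd_unit ?_ hu
        exact Dvd.dvd.mul_left
          (Finset.dvd_prod_of_mem _ (Finset.mem_Icc.mpr ⟨h, by omega⟩)) _
    set e : ℕ → B := fun r => if h : IsUnit (D r) then ((h.unit⁻¹ : Bˣ) : B) else 0
      with he
    have hde : ∀ r, r < p ^ n → D r * e r = 1 := by
      intro r hr
      rw [he]
      simp only [dif_pos (hdr r hr)]
      nth_rewrite 1 [← (hdr r hr).unit_spec]
      exact Units.mul_inv _
    set M : ℕ → ℕ → B := fun s l => (s.choose l : B) *
        ∑ k ∈ Finset.range (l + 1), (l.choose k : B) * L ^ k * a (k + s - l) with hM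
    refine ⟨convInv7 M e, ?_⟩
    intro s hs
    have hgoal : ∑ l ∈ Finset.range (s + 1), (s.choose l : B) *
        (∑ k ∈ Finset.range (l + 1),
          (l.choose k : B) * L ^ k * a (k + s - l)) * convInv7 M e l
        = ∑ l ∈ Finset.range (s + 1), M s l * convInv7 M e l := by
      apply Finset.sum_congr rfl
      intro l _
      rw [hM]
    rw [hgoal, Finset.sum_range_succ, convInv7_eq]
    have hMss : M s s = D s := by
      rw [hM, hD]
      simp only [Nat.choose_self, Nat.cast_one, one_mul]
      apply Finset.sum_congr rfl
      intro k _
      have : k + s - s = k := by omega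
      rw [this]
    rw [hMss]
    have h1 := hde s hs
    linear_combination ((if s = 0 then 1 else 0)
      - ∑ l ∈ Finset.range s, M s l * convInv7 M e l) * h1
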